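/- Let T > 0 and let y, z : [0,T] × ℝ⁶ → ℂ be measurable, with y(t,·) and z(t,·) differentiable on ℝ⁶ for almost every t. Then ∫₀ᵀ ‖z(t)·conj(y(t))‖_{W^{1,2}(ℝ⁶)} dt ≤ ‖z‖_{L²(0,T;L⁶(ℝ⁶))} · ‖y‖_{L²(0,T;W^{1,3}(ℝ⁶))} + ‖z‖_{L²(0,T;W^{1,3}(ℝ⁶))} · ‖y‖_{L²(0,T;L⁶(ℝ⁶))}, as an inequality of extended nonnegative reals, where ‖f‖_{L²(0,T;W^{1,p})} := (∫₀ᵀ ‖f(t)‖_{W^{1,p}}² dt)^{1/2}. (Hölder part of the bilinear estimate used in the H¹ local theory for d = 6.) -/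

import Mathlib

open MeasureTheory Filter
open scoped ENNReal

/-- Sobolev `W^{1,p}` norm of a function `f : ℝ⁶ → ℂ`:
`‖f‖_{W^{1,p}} = ‖f‖_{L^p} + ‖∇f‖_{L^p}`, valued in `[0,∞]`. -/
noncomputable def W1Norm6 (p : ℝ≥0∞) (f : (Fin 6 → ℝ) → ℂ) : ℝ≥0∞ :=
  eLpNorm f p (volume : Measure (Fin 6 → ℝ))
    + eLpNorm (fderiv ℝ f) p (volume : Measure (Fin 6 → ℝ))

section Aux

lemma norm_conjCLE_comp (L : (Fin 6 → ℝ) →L[ℝ] ℂ) :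
    ‖((Complex.conjCLE : ℂ ≃L[ℝ] ℂ) : ℂ →L[ℝ] ℂ).comp L‖ = ‖L‖ := by
  apply le_antisymm
  · refine ContinuousLinearMap.opNorm_le_bound _ (norm_nonneg L) fun x => ?_
    simpa using L.le_opNorm x
  · refine ContinuousLinearMap.opNorm_le_bound _ (norm_nonneg _) fun x => ?_
    simpa using (((Complex.conjCLE : ℂ ≃L[ℝ] ℂ) : ℂ →L[ℝ] ℂ).comp L).le_opNorm x

lemma sixth_third : (1 : ℝ≥0∞) / 2 = 1 / 6 + 1 / 3 := by
  have : (1:ℝ≥0∞)/6 + 1/3 = 1/6 + 2/6 := by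
    congr 1
    rw [ENNReal.div_eq_div_iff (by norm_num) (by norm_num) (by norm_num) (by norm_num)]
    norm_num
  rw [this, ← ENNReal.add_div]
  rw [ENNReal.div_eq_div_iff (by norm_num) (by norm_num) (by norm_num) (by norm_num)]
  norm_num

/-- The pointwise (in time) product estimate. -/
lemma pointwise_bound (g h : (Fin 6 → ℝ) → ℂ) (hgm : Measurable g) (hhm : Measurable h)
    (hgd : Differentiable ℝ g) (hhd : Differentiable ℝ h) :
    W1Norm6 2 (fun ξ => h ξ * (starRingEnd ℂ) (g ξ))
      ≤ eLpNorm h 6 (volume : Measure (Fin 6 → ℝ)) * W1Norm6 3 g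
        + W1Norm6 3 h * eLpNorm g 6 (volume : Measure (Fin 6 → ℝ)) := by
  set μ : Measure (Fin 6 → ℝ) := volume
  set cg : (Fin 6 → ℝ) → ℂ := fun ξ => (starRingEnd ℂ) (g ξ) with hcg
  have hcg_eq : cg = (Complex.conjCLE : ℂ ≃L[ℝ] ℂ) ∘ g := by
    funext ξ; simp [hcg]
  have hcgd : Differentiable ℝ cg := by
    rw [hcg_eq]; exact (Complex.conjCLE : ℂ ≃L[ℝ] ℂ).differentiable.comp hgd
  have hcgm : Measurable cg := (Complex.conjCLE : ℂ ≃L[ℝ] ℂ).continuous.measurable.comp hgm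
  have hcg_norm : ∀ ξ, ‖cg ξ‖ = ‖g ξ‖ := fun ξ => by simp [hcg]
  have hLp_cg : ∀ p : ℝ≥0∞, eLpNorm cg p μ = eLpNorm g p μ := fun p =>
    eLpNorm_congr_norm_ae (Eventually.of_forall hcg_norm)
  have hDcg : ∀ ξ, fderiv ℝ cg ξ
      = ((Complex.conjCLE : ℂ ≃L[ℝ] ℂ) : ℂ →L[ℝ] ℂ).comp (fderiv ℝ g ξ) := by
    intro ξ
    rw [hcg_eq]
    exact (Complex.conjCLE : ℂ ≃L[ℝ] ℂ).comp_fderiv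
  have hDcg_norm : eLpNorm (fderiv ℝ cg) 3 μ = eLpNorm (fderiv ℝ g) 3 μ :=
    eLpNorm_congr_norm_ae (Eventually.of_forall fun ξ => by rw [hDcg ξ, norm_conjCLE_comp])
  have h1 : eLpNorm (fun ξ => h ξ * cg ξ) 2 μ ≤ eLpNorm h 6 μ * eLpNorm g 3 μ := by
    have := eLpNorm_smul_le_mul_eLpNorm (f := cg) (φ := h)
      hcgm.aestronglyMeasurable hhm.aestronglyMeasurable (p := 6) (q := 3) (r := 2) (μ := μ)
      (hpqr := ⟨by simpa [one_div] using sixth_third.symm⟩)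
    rw [hLp_cg] at this
    exact this
  have hDprod : fderiv ℝ (fun ξ => h ξ * cg ξ)
      = fun ξ => h ξ • fderiv ℝ cg ξ + cg ξ • fderiv ℝ h ξ := by
    funext ξ
    exact fderiv_mul (hhd.differentiableAt) (hcgd.differentiableAt)
  have hmeasDh : Measurable (fderiv ℝ h) := measurable_fderiv ℝ h
  have hmeasDcg : Measurable (fderiv ℝ cg) := measurable_fderiv ℝ cg
  have h2a : eLpNorm (fun ξ => h ξ • fderiv ℝ cg ξ) 2 μ
      ≤ eLpNorm h 6 μ * eLpNorm (fderiv ℝ g) 3 μ := by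
    have := eLpNorm_smul_le_mul_eLpNorm (f := fderiv ℝ cg) (φ := h)
      hmeasDcg.aestronglyMeasurable hhm.aestronglyMeasurable (p := 6) (q := 3) (r := 2) (μ := μ)
      (hpqr := ⟨by simpa [one_div] using sixth_third.symm⟩)
    rw [hDcg_norm] at this
    exact this
  have h2b : eLpNorm (fun ξ => cg ξ • fderiv ℝ h ξ) 2 μ
      ≤ eLpNorm g 6 μ * eLpNorm (fderiv ℝ h) 3 μ := by
    have := eLpNorm_smul_le_mul_eLpNorm (f := fderiv ℝ h) (φ := cg)
      hmeasDh.aestronglyMeasurable hcgm.aestronglyMeasurable (p := 6) (q := 3) (r := 2) (μ := μ)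
      (hpqr := ⟨by simpa [one_div] using sixth_third.symm⟩)
    rw [hLp_cg] at this
    exact this
  have h2 : eLpNorm (fderiv ℝ (fun ξ => h ξ * cg ξ)) 2 μ
      ≤ eLpNorm h 6 μ * eLpNorm (fderiv ℝ g) 3 μ
        + eLpNorm g 6 μ * eLpNorm (fderiv ℝ h) 3 μ := by
    rw [hDprod]
    refine le_trans (eLpNorm_add_le (f := fun ξ => h ξ • fderiv ℝ cg ξ)
      (g := fun ξ => cg ξ • fderiv ℝ h ξ) (hhm.aestronglyMeasurable.smul hmeasDcg.aestronglyMeasurable)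
      (hcgm.aestronglyMeasurable.smul hmeasDh.aestronglyMeasurable) one_le_two) (add_le_add h2a h2b)
  unfold W1Norm6
  calc eLpNorm (fun ξ => h ξ * cg ξ) 2 μ + eLpNorm (fderiv ℝ (fun ξ => h ξ * cg ξ)) 2 μ
      ≤ (eLpNorm h 6 μ * eLpNorm g 3 μ)
        + (eLpNorm h 6 μ * eLpNorm (fderiv ℝ g) 3 μ + eLpNorm g 6 μ * eLpNorm (fderiv ℝ h) 3 μ) :=
        add_le_add h1 h2
    _ ≤ eLpNorm h 6 μ * (eLpNorm g 3 μ + eLpNorm (fderiv ℝ g) 3 μ)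
        + (eLpNorm h 3 μ + eLpNorm (fderiv ℝ h) 3 μ) * eLpNorm g 6 μ := by
        rw [mul_add, add_mul]
        rw [← add_assoc]
        refine add_le_add le_rfl ?_
        rw [mul_comm]
        exact le_add_self

/-- Reconstruction of a continuous linear map `ℝ⁶ →L[ℝ] ℂ` from its coordinates. -/
noncomputable def clm6 (c : Fin 6 → ℂ) : (Fin 6 → ℝ) →L[ℝ] ℂ :=
  ∑ i, c i • ((Complex.ofRealCLM : ℝ →L[ℝ] ℂ).comp (ContinuousLinearMap.proj i))

lemma continuous_clm6 : Continuous clm6 :=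
  continuous_finset_sum _ fun i _ => (continuous_apply i).smul continuous_const

lemma clm6_apply (c : Fin 6 → ℂ) (v : Fin 6 → ℝ) :
    clm6 c v = ∑ i, c i * (v i : ℂ) := by
  simp [clm6, smul_eq_mul]

lemma clm6_repr (L : (Fin 6 → ℝ) →L[ℝ] ℂ) :
    clm6 (fun i => L (Pi.single i 1)) = L := by
  ext v
  rw [clm6_apply]
  have hv : v = ∑ i, v i • (Pi.single i 1 : Fin 6 → ℝ) := by
    funext j
    simp [Finset.sum_apply, Pi.single_apply]
  conv_rhs => rw [hv]
  rw [map_sum]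
  refine Finset.sum_congr rfl fun i _ => ?_
  rw [ContinuousLinearMap.map_smul, Complex.real_smul, mul_comm]

/-- A.e.-measurability in `(t, ξ)` of `‖fderiv ℝ (y t) ξ‖`. -/
lemma aemeas_fderiv_norm {μ : Measure ℝ} (y : ℝ → (Fin 6 → ℝ) → ℂ)
    (hy : Measurable (Function.uncurry y))
    (hdiff : ∀ᵐ t ∂μ, Differentiable ℝ (y t)) :
    AEMeasurable (fun p : ℝ × (Fin 6 → ℝ) => ‖fderiv ℝ (y p.1) p.2‖)
      (μ.prod (volume : Measure (Fin 6 → ℝ))) := by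
  classical
  let G : ℕ → ℝ × (Fin 6 → ℝ) → Fin 6 → ℂ := fun n p i =>
    (n : ℝ) • (y p.1 (p.2 + (n : ℝ)⁻¹ • (Pi.single i 1 : Fin 6 → ℝ)) - y p.1 p.2)
  have hGmeas : ∀ n, Measurable (G n) := by
    intro n
    refine measurable_pi_lambda _ fun i => ?_
    show Measurable fun p : ℝ × (Fin 6 → ℝ) =>
      (n : ℝ) • (y p.1 (p.2 + (n : ℝ)⁻¹ • (Pi.single i 1 : Fin 6 → ℝ)) - y p.1 p.2)
    refine Measurable.const_smul (g := fun p : ℝ × (Fin 6 → ℝ) =>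
      y p.1 (p.2 + (n : ℝ)⁻¹ • (Pi.single i 1 : Fin 6 → ℝ)) - y p.1 p.2) ?_ (n : ℝ)
    refine Measurable.sub ?_ ?_
    · exact hy.comp (measurable_fst.prodMk (measurable_snd.add_const _))
    · exact hy.comp (measurable_fst.prodMk measurable_snd)
  have hmeas : ∀ n, Measurable fun p => ‖clm6 (G n p)‖ := fun n =>
    (continuous_norm.comp continuous_clm6).measurable.comp (hGmeas n)
  have hbase : ∀ᵐ t ∂μ, ∀ ξ, Tendsto (fun n => ‖clm6 (G n (t, ξ))‖) atTop
      (nhds ‖fderiv ℝ (y t) ξ‖) := by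
    filter_upwards [hdiff] with t ht
    intro ξ
    have hL : Tendsto (fun n => clm6 (G n (t, ξ))) atTop (nhds (fderiv ℝ (y t) ξ)) := by
      have hrepr : fderiv ℝ (y t) ξ = clm6 (fun i => fderiv ℝ (y t) ξ (Pi.single i 1)) :=
        (clm6_repr _).symm
      rw [hrepr]
      refine (continuous_clm6.tendsto _).comp ?_
      rw [tendsto_pi_nhds]
      intro i
      have hc : Tendsto (fun n : ℕ => ‖(n : ℝ)‖) atTop atTop := by
        simpa using tendsto_natCast_atTop_atTop (R := ℝ)
      exact (ht ξ).hasFDerivAt.lim (Pi.single i 1) hc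
    exact hL.norm
  have htend : ∀ᵐ p ∂(μ.prod (volume : Measure (Fin 6 → ℝ))),
      Tendsto (fun n => ‖clm6 (G n p)‖) atTop (nhds ‖fderiv ℝ (y p.1) p.2‖) := by
    rw [ae_iff]
    set S : Set ℝ := {t | ¬ ∀ ξ, Tendsto (fun n => ‖clm6 (G n (t, ξ))‖) atTop
      (nhds ‖fderiv ℝ (y t) ξ‖)} with hS
    have h0 : μ S = 0 := ae_iff.mp hbase
    have hnull : (μ.prod (volume : Measure (Fin 6 → ℝ)))
        (toMeasurable μ S ×ˢ (Set.univ : Set (Fin 6 → ℝ))) = 0 := by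
      rw [Measure.prod_prod, measure_toMeasurable, h0, zero_mul]
    refine measure_mono_null (fun p hp => ?_) hnull
    refine Set.mem_prod.mpr ⟨subset_toMeasurable _ _ ?_, trivial⟩
    intro hPp
    exact hp (hPp p.2)
  exact aemeasurable_of_tendsto_metrizable_ae atTop (fun n => (hmeas n).aemeasurable) htend

/-- Measurability in `t` of `eLpNorm (w t) p`. -/
lemma meas_eLpNorm_section {p : ℝ≥0∞} (hp0 : p ≠ 0) (hpt : p ≠ ∞)
    (w : ℝ → (Fin 6 → ℝ) → ℂ) (hw : Measurable (Function.uncurry w)) :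
    Measurable fun t => eLpNorm (w t) p (volume : Measure (Fin 6 → ℝ)) := by
  simp_rw [eLpNorm_eq_lintegral_rpow_enorm_toReal hp0 hpt]
  refine (ENNReal.continuous_rpow_const.measurable.comp ?_)
  refine Measurable.lintegral_prod_right' (f := fun q : ℝ × (Fin 6 → ℝ) =>
    ‖w q.1 q.2‖ₑ ^ p.toReal) ?_
  exact ENNReal.continuous_rpow_const.measurable.comp hw.enorm

/-- A.e.-measurability in `t` of `eLpNorm (fderiv ℝ (y t)) p`. -/
lemma aemeas_eLpNorm_fderiv {μ : Measure ℝ} [SFinite μ] {p : ℝ≥0∞} (hp0 : p ≠ 0) (hpt : p ≠ ∞)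
    (y : ℝ → (Fin 6 → ℝ) → ℂ) (hy : Measurable (Function.uncurry y))
    (hdiff : ∀ᵐ t ∂μ, Differentiable ℝ (y t)) :
    AEMeasurable (fun t => eLpNorm (fderiv ℝ (y t)) p (volume : Measure (Fin 6 → ℝ))) μ := by
  have hF := aemeas_fderiv_norm (μ := μ) y hy hdiff
  have hj : AEMeasurable (fun q : ℝ × (Fin 6 → ℝ) =>
      ‖fderiv ℝ (y q.1) q.2‖ₑ ^ p.toReal) (μ.prod volume) := by
    have := hF.enorm
    simp_rw [enorm_norm] at this
    exact ENNReal.continuous_rpow_const.measurable.comp_aemeasurable this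
  have hmeas : Measurable fun t => ∫⁻ ξ, hj.mk _ (t, ξ) :=
    Measurable.lintegral_prod_right' hj.measurable_mk
  have hae : (fun t => ∫⁻ ξ, ‖fderiv ℝ (y t) ξ‖ₑ ^ p.toReal)
      =ᵐ[μ] fun t => ∫⁻ ξ, hj.mk _ (t, ξ) := by
    filter_upwards [Measure.ae_ae_of_ae_prod hj.ae_eq_mk] with t ht
    exact lintegral_congr_ae ht
  have hbase : AEMeasurable
      (fun t => ∫⁻ ξ, ‖fderiv ℝ (y t) ξ‖ₑ ^ p.toReal) μ :=
    hmeas.aemeasurable.congr hae.symm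
  simp_rw [eLpNorm_eq_lintegral_rpow_enorm_toReal hp0 hpt]
  exact ENNReal.continuous_rpow_const.measurable.comp_aemeasurable hbase

end Aux

/-- Hölder part of the bilinear estimate used in the `H¹` local theory for `d = 6`:
`∫₀ᵀ ‖z(t) conj(y(t))‖_{W^{1,2}} dt ≤ ‖z‖_{L²(0,T;L⁶)} ‖y‖_{L²(0,T;W^{1,3})}
  + ‖z‖_{L²(0,T;W^{1,3})} ‖y‖_{L²(0,T;L⁶)}`. -/


theorem bilinear_estimate_H1_d6 (T : ℝ) (hT : 0 < T) (y z : ℝ → (Fin 6 → ℝ) → ℂ)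
    (hy : Measurable (Function.uncurry y)) (hz : Measurable (Function.uncurry z))
    (hdiff : ∀ᵐ t ∂((volume : Measure ℝ).restrict (Set.Icc (0 : ℝ) T)),
      Differentiable ℝ (y t) ∧ Differentiable ℝ (z t)) :
    (∫⁻ t in Set.Icc (0 : ℝ) T,
        W1Norm6 2 (fun ξ => z t ξ * (starRingEnd ℂ) (y t ξ)))
      ≤ (∫⁻ t in Set.Icc (0 : ℝ) T,
            eLpNorm (z t) 6 (volume : Measure (Fin 6 → ℝ)) ^ ((2 : ℝ))) ^ ((1 : ℝ) / 2)
          * (∫⁻ t in Set.Icc (0 : ℝ) T, W1Norm6 3 (y t) ^ ((2 : ℝ))) ^ ((1 : ℝ) / 2)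
        + (∫⁻ t in Set.Icc (0 : ℝ) T, W1Norm6 3 (z t) ^ ((2 : ℝ))) ^ ((1 : ℝ) / 2)
          * (∫⁻ t in Set.Icc (0 : ℝ) T,
              eLpNorm (y t) 6 (volume : Measure (Fin 6 → ℝ)) ^ ((2 : ℝ))) ^ ((1 : ℝ) / 2) := by
  set μ : Measure ℝ := (volume : Measure ℝ).restrict (Set.Icc (0 : ℝ) T) with hμ
  set A : ℝ → ℝ≥0∞ := fun t => eLpNorm (z t) 6 (volume : Measure (Fin 6 → ℝ)) with hA
  set G6 : ℝ → ℝ≥0∞ := fun t => eLpNorm (y t) 6 (volume : Measure (Fin 6 → ℝ)) with hG6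
  set By : ℝ → ℝ≥0∞ := fun t => W1Norm6 3 (y t) with hBy
  set Bz : ℝ → ℝ≥0∞ := fun t => W1Norm6 3 (z t) with hBz
  have hdy : ∀ᵐ t ∂μ, Differentiable ℝ (y t) := hdiff.mono fun t ht => ht.1
  have hdz : ∀ᵐ t ∂μ, Differentiable ℝ (z t) := hdiff.mono fun t ht => ht.2
  have hAm : AEMeasurable A μ :=
    (meas_eLpNorm_section (by norm_num) (by norm_num) z hz).aemeasurable
  have hG6m : AEMeasurable G6 μ :=
    (meas_eLpNorm_section (by norm_num) (by norm_num) y hy).aemeasurable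
  have hBym : AEMeasurable By μ := by
    exact ((meas_eLpNorm_section (p := 3) (by norm_num) (by norm_num) y hy).aemeasurable).add
      (aemeas_eLpNorm_fderiv (by norm_num) (by norm_num) y hy hdy)
  have hBzm : AEMeasurable Bz μ := by
    exact ((meas_eLpNorm_section (p := 3) (by norm_num) (by norm_num) z hz).aemeasurable).add
      (aemeas_eLpNorm_fderiv (by norm_num) (by norm_num) z hz hdz)
  have hpq : Real.HolderConjugate 2 2 := Real.HolderConjugate.two_two
  have step1 : (∫⁻ t, W1Norm6 2 (fun ξ => z t ξ * (starRingEnd ℂ) (y t ξ)) ∂μ)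
      ≤ ∫⁻ t, (A t * By t + Bz t * G6 t) ∂μ := by
    refine lintegral_mono_ae ?_
    filter_upwards [hdiff] with t ht
    exact pointwise_bound (y t) (z t)
      (hy.comp (measurable_prodMk_left))
      (hz.comp (measurable_prodMk_left)) ht.1 ht.2
  have step2 : (∫⁻ t, (A t * By t + Bz t * G6 t) ∂μ)
      = (∫⁻ t, A t * By t ∂μ) + ∫⁻ t, Bz t * G6 t ∂μ :=
    lintegral_add_left' (hAm.mul hBym) _
  have step3 : (∫⁻ t, A t * By t ∂μ)
      ≤ (∫⁻ t, A t ^ (2 : ℝ) ∂μ) ^ ((1:ℝ)/2) * (∫⁻ t, By t ^ (2 : ℝ) ∂μ) ^ ((1:ℝ)/2) :=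
    ENNReal.lintegral_mul_le_Lp_mul_Lq μ hpq hAm hBym
  have step4 : (∫⁻ t, Bz t * G6 t ∂μ)
      ≤ (∫⁻ t, Bz t ^ (2 : ℝ) ∂μ) ^ ((1:ℝ)/2) * (∫⁻ t, G6 t ^ (2 : ℝ) ∂μ) ^ ((1:ℝ)/2) :=
    ENNReal.lintegral_mul_le_Lp_mul_Lq μ hpq hBzm hG6m
  calc (∫⁻ t, W1Norm6 2 (fun ξ => z t ξ * (starRingEnd ℂ) (y t ξ)) ∂μ)
      ≤ ∫⁻ t, (A t * By t + Bz t * G6 t) ∂μ := step1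
    _ = (∫⁻ t, A t * By t ∂μ) + ∫⁻ t, Bz t * G6 t ∂μ := step2
    _ ≤ _ := add_le_add step3 step4
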